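/- arXiv:1409.7734 — 2 statements merged into one kernel-verified Lean document; each statement's English description precedes it below -/
import Mathlib

section
/- If S and T are bounded self-adjoint operators on a Hilbert space, then the Hausdorff distance between their spectra is at most the operator norm ‖S − T‖. -/
open Metric in
lemma aux_infDist_le {A : Type*} [CStarAlgebra A] (a b : A) (ha : IsSelfAdjoint a)
    {z : ℂ} (hz : z ∈ spectrum ℂ b) : Metric.infDist z (spectrum ℂ a) ≤ ‖b - a‖ := by
  by_contra hlt
  push_neg at hlt
  set d := Metric.infDist z (spectrum ℂ a) with hd
  have hd0 : 0 < d := lt_of_le_of_lt (norm_nonneg _) hlt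
  have hnz : ∀ x ∈ spectrum ℂ a, (z - x) ≠ 0 := by
    intro x hx h0
    have : d ≤ dist z x := Metric.infDist_le_dist_of_mem hx
    rw [dist_eq_norm, h0, norm_zero] at this
    exact absurd (lt_of_lt_of_le hd0 this) (lt_irrefl 0)
  have hna : IsStarNormal a := ha.isStarNormal
  set u : Aˣ := cfcUnits (fun x : ℂ => z - x) a hnz with hu
  have huval : (u : A) = algebraMap ℂ A z - a := by
    show cfc (fun x : ℂ => z - x) a = algebraMap ℂ A z - a
    rw [cfc_sub (fun _ : ℂ => z) (fun x : ℂ => x) a, cfc_const z a, cfc_id' ℂ a]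
  have huinv : (↑u⁻¹ : A) = cfc (fun x : ℂ => (z - x)⁻¹) a := rfl
  have hinvnorm : ‖(↑u⁻¹ : A)‖ ≤ d⁻¹ := by
    rw [huinv]
    refine norm_cfc_le (by positivity) fun x hx => ?_
    have hdx : d ≤ ‖z - x‖ := by
      simpa [dist_eq_norm] using Metric.infDist_le_dist_of_mem hx
    rw [norm_inv]
    exact inv_anti₀ hd0 hdx
  have hsmall : ‖(↑u⁻¹ : A) * (b - a)‖ < 1 := by
    calc ‖(↑u⁻¹ : A) * (b - a)‖ ≤ ‖(↑u⁻¹ : A)‖ * ‖b - a‖ := norm_mul_le _ _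
    _ ≤ d⁻¹ * ‖b - a‖ := by gcongr
    _ < d⁻¹ * d := by gcongr
    _ = 1 := inv_mul_cancel₀ hd0.ne'
  have hunit : IsUnit (algebraMap ℂ A z - b) := by
    have key : algebraMap ℂ A z - b = (u : A) * (1 - (↑u⁻¹ : A) * (b - a)) := by
      rw [mul_sub, mul_one, ← mul_assoc, u.mul_inv, one_mul, huval]
      abel
    rw [key]
    exact u.isUnit.mul (Units.oneSub _ hsmall).isUnit
  exact (spectrum.mem_iff.mp hz) hunit

theorem stmt_1 {H : Type*} [NormedAddCommGroup H] [InnerProductSpace ℂ H] [CompleteSpace H]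
    (S T : H →L[ℂ] H) (hS : IsSelfAdjoint S) (hT : IsSelfAdjoint T) :
    Metric.hausdorffDist (spectrum ℂ S) (spectrum ℂ T) ≤ ‖S - T‖ := by
  refine Metric.hausdorffDist_le_of_infDist (norm_nonneg _) ?_ ?_
  · intro z hz
    exact aux_infDist_le T S hT hz
  · intro z hz
    have := aux_infDist_le S T hS hz
    rwa [norm_sub_rev] at this
end

section
/- If U and V are unitary operators on a Hilbert space, then the Hausdorff distance between their spectra (as compact subsets of ℂ) is at most ‖U − V‖. -/
open Metric Pointwise

lemma stmt_2_aux {A : Type*} [CStarAlgebra A] (U V : A) (hV : V ∈ unitary A)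
    {z : ℂ} (hz : z ∈ spectrum ℂ U) : Metric.infDist z (spectrum ℂ V) ≤ ‖U - V‖ := by
  rcases subsingleton_or_nontrivial A with hA | hA
  · simp [spectrum.of_subsingleton] at hz
  by_contra hlt
  push_neg at hlt
  set d := Metric.infDist z (spectrum ℂ V) with hd
  have hd0 : 0 < d := lt_of_le_of_lt (norm_nonneg _) hlt
  have hzV : z ∉ spectrum ℂ V := by
    intro h
    rw [hd] at hd0
    rw [Metric.infDist_zero_of_mem h] at hd0
    exact lt_irrefl _ hd0
  obtain ⟨x, hx⟩ := spectrum.notMem_iff.mp hzV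
  have hVN : IsStarNormal V := isStarNormal_of_mem_unitary hV
  -- x is normal
  have hc : Commute (↑x : A) (star ↑x) := by
    rw [hx, star_sub, ← algebraMap_star_comm]
    have c1 : Commute (algebraMap ℂ A z) (algebraMap ℂ A (star z) - star V) :=
      Algebra.commute_algebraMap_left _ _
    have c2 : Commute V (algebraMap ℂ A (star z) - star V) :=
      (Algebra.commute_algebraMap_right _ _).sub_right hVN.star_comm_self.symm
    exact c1.sub_left c2
  -- x⁻¹ is normal
  have hcInv : Commute (↑x⁻¹ : A) (star ↑x⁻¹) := by
    have := hc
    rw [← Units.coe_star] at this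
    have h2 : Commute (↑x⁻¹ : A) (↑(star x)⁻¹ : A) := this.units_inv_left.units_inv_right
    rwa [Units.coe_star_inv] at h2
  have hxInvN : IsStarNormal (↑x⁻¹ : A) := ⟨hcInv.symm⟩
  -- spectrum of x
  have hspec : spectrum ℂ (↑x : A) = ({z} : Set ℂ) - spectrum ℂ V := by
    rw [hx]; exact (spectrum.singleton_sub_eq V z).symm
  -- norm bound on x⁻¹
  have hnormInv : ‖(↑x⁻¹ : A)‖ ≤ d⁻¹ := by
    have hsr : spectralRadius ℂ (↑x⁻¹ : A) = ‖(↑x⁻¹ : A)‖₊ :=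
      IsStarNormal.spectralRadius_eq_nnnorm _
    have hle : spectralRadius ℂ (↑x⁻¹ : A) ≤ ENNReal.ofReal d⁻¹ := by
      rw [spectralRadius]
      refine iSup₂_le fun k hk => ?_
      rw [← spectrum.map_inv, Set.mem_inv, hspec, Set.mem_sub] at hk
      obtain ⟨w, hw1, w2, hw2, hzw⟩ := hk
      rw [Set.mem_singleton_iff] at hw1
      rw [hw1] at hzw
      rcases eq_or_ne k 0 with rfl | hk0
      · simp only [inv_zero, nnnorm_zero, ENNReal.coe_zero]
        exact le_of_lt (ENNReal.ofReal_pos.mpr (inv_pos.mpr hd0))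
      · have hdk : d ≤ ‖k⁻¹‖ := by
          rw [← hzw]
          calc d ≤ dist z w2 := Metric.infDist_le_dist_of_mem hw2
            _ = ‖z - w2‖ := dist_eq_norm z w2
        have : ‖k‖ ≤ d⁻¹ := by
          rw [norm_inv] at hdk
          calc ‖k‖ = (‖k‖⁻¹)⁻¹ := by rw [inv_inv]
            _ ≤ d⁻¹ := inv_anti₀ hd0 hdk
        calc (‖k‖₊ : ENNReal) = ENNReal.ofReal ‖k‖ := by
              exact (ofReal_norm k).symm
          _ ≤ ENNReal.ofReal d⁻¹ := ENNReal.ofReal_le_ofReal this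
    rw [hsr] at hle
    replace hle : ENNReal.ofReal ‖(↑x⁻¹ : A)‖ ≤ ENNReal.ofReal d⁻¹ := (ofReal_norm _).trans_le hle
    exact (ENNReal.ofReal_le_ofReal_iff (by positivity)).mp hle
  -- x⁻¹ has positive norm
  have hxInvPos : 0 < ‖(↑x⁻¹ : A)‖ := Units.norm_pos x⁻¹
  have hkey : ‖(algebraMap ℂ A z - U) - ↑x‖ < ‖(↑x⁻¹ : A)‖⁻¹ := by
    have h1 : (algebraMap ℂ A z - U) - ↑x = V - U := by rw [hx]; abel
    rw [h1, norm_sub_rev]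
    calc ‖U - V‖ < d := hlt
      _ = (d⁻¹)⁻¹ := by rw [inv_inv]
      _ ≤ ‖(↑x⁻¹ : A)‖⁻¹ := inv_anti₀ hxInvPos hnormInv
  exact spectrum.mem_iff.mp hz (x.ofNearby _ hkey).isUnit

theorem stmt_2 {H : Type*} [NormedAddCommGroup H] [InnerProductSpace ℂ H] [CompleteSpace H]
    (U V : H →L[ℂ] H) (hU : U ∈ unitary (H →L[ℂ] H)) (hV : V ∈ unitary (H →L[ℂ] H)) :
    Metric.hausdorffDist (spectrum ℂ U) (spectrum ℂ V) ≤ ‖U - V‖ := by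
  refine Metric.hausdorffDist_le_of_infDist (norm_nonneg _) ?_ ?_
  · exact fun z hz => stmt_2_aux U V hV hz
  · intro z hz
    rw [norm_sub_rev]
    exact stmt_2_aux V U hU hz
end
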